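/- Let B = conv((B²₂ × {0}) ∪ {(0,0,±1)}) ⊂ ℝ³ with gauge norm ‖·‖_B. Let T* = (1/√3)·T + (0, 0, (√3-1)/√3), where T has vertices (√3/2, -1/2, 0), (-√3/2, -1/2, 0), (0, 1, 0), and let S = conv({0} ∪ vertices(T*)). Then S is an equilateral tetrahedron in ‖·‖_B: all six pairwise distances among its four vertices equal 1. -/

import Mathlib

open Set

/-- The Euclidean unit disk in the horizontal plane of `ℝ³`. -/
def diskSet : Set (Fin 3 → ℝ) := {p | p 0 ^ 2 + p 1 ^ 2 ≤ 1 ∧ p 2 = 0}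

/-- The double cone over the Euclidean unit disk with apexes `(0,0,±1)`. -/
def Bcone : Set (Fin 3 → ℝ) :=
  convexHull ℝ (diskSet ∪ ({![0, 0, 1], ![0, 0, -1]} : Set (Fin 3 → ℝ)))

/-- Vertices of the equilateral triangle `T` in the horizontal plane. -/
noncomputable def vT : Fin 3 → (Fin 3 → ℝ) :=
  ![![Real.sqrt 3 / 2, -(1 / 2 : ℝ), 0], ![-(Real.sqrt 3 / 2), -(1 / 2 : ℝ), 0], ![0, 1, 0]]

/-- Vertices of the triangle `T⋆ = (1/√3)·T + (0,0,(√3-1)/√3)`. -/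
noncomputable def wT : Fin 3 → (Fin 3 → ℝ) :=
  fun i => (1 / Real.sqrt 3) • vT i + ![0, 0, (Real.sqrt 3 - 1) / Real.sqrt 3]

lemma sq_sqrt3 : Real.sqrt 3 ^ 2 = 3 := Real.sq_sqrt (by norm_num)
lemma sqrt3_pos : (0:ℝ) < Real.sqrt 3 := Real.sqrt_pos.2 (by norm_num)
lemma one_lt_sqrt3 : (1:ℝ) < Real.sqrt 3 := by
  nlinarith [sq_sqrt3, sqrt3_pos]

/-- linear functional bound on Bcone -/
lemma le_one_on_Bcone (c : Fin 3 → ℝ) (hc : c 0 ^ 2 + c 1 ^ 2 ≤ 1) (hc2 : |c 2| ≤ 1) :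
    ∀ w ∈ Bcone, c 0 * w 0 + c 1 * w 1 + c 2 * w 2 ≤ 1 := by
  have hlin : IsLinearMap ℝ (fun w : Fin 3 → ℝ => c 0 * w 0 + c 1 * w 1 + c 2 * w 2) := by
    constructor
    · intro x y; simp [Pi.add_apply]; ring
    · intro a x; simp [Pi.smul_apply, smul_eq_mul]; ring
  have hconv : Convex ℝ {w : Fin 3 → ℝ | c 0 * w 0 + c 1 * w 1 + c 2 * w 2 ≤ 1} :=
    convex_halfSpace_le hlin 1
  intro w hw
  have := convexHull_min (s := diskSet ∪ ({![0, 0, 1], ![0, 0, -1]} : Set (Fin 3 → ℝ)))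
    (t := {w : Fin 3 → ℝ | c 0 * w 0 + c 1 * w 1 + c 2 * w 2 ≤ 1}) ?_ hconv hw
  · exact this
  · rintro p (⟨h1, h2⟩ | hp)
    · have : c 0 * p 0 + c 1 * p 1 ≤ 1 := by
        nlinarith [sq_nonneg (c 0 - p 0), sq_nonneg (c 1 - p 1)]
      simp only [mem_setOf_eq, h2]; simpa using this
    · have h2 := abs_le.1 hc2
      rcases hp with hp | hp <;> subst hp <;> simp <;> linarith

lemma gauge_Bcone_eq_one (v : Fin 3 → ℝ) (hv : v ∈ Bcone) (c : Fin 3 → ℝ)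
    (hc : c 0 ^ 2 + c 1 ^ 2 ≤ 1) (hc2 : |c 2| ≤ 1)
    (hl : c 0 * v 0 + c 1 * v 1 + c 2 * v 2 = 1) : gauge Bcone v = 1 := by
  refine le_antisymm (gauge_le_one_of_mem hv) ?_
  rw [gauge_def]
  refine le_csInf ⟨1, Set.mem_sep_iff.2 ⟨by norm_num, by simpa using Set.smul_mem_smul_set (a := (1:ℝ)) hv⟩⟩ ?_
  rintro r ⟨hr, hx⟩
  simp only [Set.mem_Ioi] at hr
  obtain ⟨w, hw, rfl⟩ := hx
  have hb := le_one_on_Bcone c hc hc2 w hw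
  have : c 0 * (r • w) 0 + c 1 * (r • w) 1 + c 2 * (r • w) 2 = r * (c 0 * w 0 + c 1 * w 1 + c 2 * w 2) := by
    simp [Pi.smul_apply, smul_eq_mul]; ring
  rw [this] at hl
  nlinarith

lemma vT_mem_disk (i : Fin 3) : vT i ∈ diskSet := by
  fin_cases i <;> constructor <;> norm_num [vT, Matrix.cons_val_two, Matrix.tail_cons, Matrix.head_cons] <;> nlinarith [sq_sqrt3]

lemma wT_mem (i : Fin 3) : wT i ∈ Bcone := by
  have h1 : vT i ∈ Bcone := subset_convexHull ℝ _ (Or.inl (vT_mem_disk i))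
  have h2 : (![0, 0, 1] : Fin 3 → ℝ) ∈ Bcone := subset_convexHull ℝ _ (Or.inr (by simp))
  have hB : Convex ℝ Bcone := convex_convexHull ℝ _
  have ha : (0:ℝ) ≤ 1 / Real.sqrt 3 := by positivity
  have hb : (0:ℝ) ≤ (Real.sqrt 3 - 1) / Real.sqrt 3 :=
    div_nonneg (by linarith [one_lt_sqrt3]) sqrt3_pos.le
  have hab : 1 / Real.sqrt 3 + (Real.sqrt 3 - 1) / Real.sqrt 3 = 1 := by
    field_simp; ring
  have := hB h1 h2 ha hb hab
  have heq : wT i = (1 / Real.sqrt 3) • vT i + ((Real.sqrt 3 - 1) / Real.sqrt 3) • ![0, 0, 1] := by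
    funext k; fin_cases k <;> simp [wT]
  rwa [heq]

lemma gauge_single (i : Fin 3) : gauge Bcone (wT i) = 1 := by
  have hs := sq_sqrt3
  have hs0 : Real.sqrt 3 ≠ 0 := ne_of_gt sqrt3_pos
  refine gauge_Bcone_eq_one _ (wT_mem i) ![vT i 0, vT i 1, 1] ?_ (by norm_num [Matrix.cons_val_two, Matrix.tail_cons, Matrix.head_cons]) ?_
  · have := (vT_mem_disk i).1
    simpa using this
  · fin_cases i <;> norm_num [wT, vT, Matrix.cons_val_two, Matrix.tail_cons, Matrix.head_cons] <;> field_simp <;> ring_nf <;>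
      linear_combination (1 : ℝ) * hs

lemma gauge_pair (i j : Fin 3) (hij : i ≠ j) : gauge Bcone (wT i - wT j) = 1 := by
  have hs := sq_sqrt3
  have hs0 : Real.sqrt 3 ≠ 0 := ne_of_gt sqrt3_pos
  have hz : (wT i - wT j) 2 = 0 := by
    fin_cases i <;> fin_cases j <;> simp [wT, vT]
  have hnorm : ((wT i - wT j) 0) ^ 2 + ((wT i - wT j) 1) ^ 2 = 1 := by
    fin_cases i <;> fin_cases j <;> (try exact absurd rfl hij) <;>
      (try norm_num [wT, vT]) <;> (try field_simp) <;> (try ring_nf) <;>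
      first
        | tauto
        | linear_combination (-12 * Real.sqrt 3 ^ 2) * hs
        | linear_combination (-12 : ℝ) * hs
        | linear_combination (-3 : ℝ) * hs
  have hv : wT i - wT j ∈ Bcone := subset_convexHull ℝ _ (Or.inl ⟨hnorm.le, hz⟩)
  refine gauge_Bcone_eq_one _ hv ![(wT i - wT j) 0, (wT i - wT j) 1, 0] ?_ (by norm_num [Matrix.cons_val_two, Matrix.tail_cons, Matrix.head_cons]) ?_
  · simpa using hnorm.le
  · simp only [Matrix.cons_val_zero, Matrix.cons_val_one, Matrix.head_cons,
      Matrix.cons_val_two, Matrix.tail_cons]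
    linear_combination hnorm

/-- The tetrahedron `S = conv({0} ∪ T⋆)` is equilateral: all six pairwise distances
among its four vertices equal 1 in the gauge norm of `B`. -/
theorem tetrahedron_S_equilateral :
    (∀ i, gauge Bcone (wT i - 0) = 1) ∧
    (∀ i j, i ≠ j → gauge Bcone (wT i - wT j) = 1) := by
  exact ⟨fun i => by rw [sub_zero]; exact gauge_single i, gauge_pair⟩
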